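/- Let n, k, r, δ be integers with n ≥ k ≥ 1, 1 ≤ r ≤ k, δ ≥ 2. Let S = {S_1,...,S_t} be a partition of [n] = {1,...,n} with δ ≤ |S_i| ≤ r+δ−1 for every i ∈ [t]. Suppose t ≥ ⌈k/r⌉ and that for every subset J ⊆ [t] with |J| = ⌈k/r⌉ one has |∪_{i∈J} S_i| ≥ k + ⌈k/r⌉(δ−1). Then for every prime power q with q ≥ C(n, k−1) (the binomial coefficient n choose k−1), there exists an optimal (r,δ)_a linear code of length n and dimension k over F_q. -/

import Mathlib

/-- The Hamming weight of a vector. -/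
def hWt {F : Type} [Field F] [DecidableEq F] {ι : Type} [Fintype ι] (c : ι → F) : ℕ :=
  (Finset.univ.filter fun i => c i ≠ 0).card

/-- `d` is the minimum Hamming distance of the linear code `C`. -/
def IsMinDist {F : Type} [Field F] [DecidableEq F] {ι : Type} [Fintype ι]
    (C : Submodule F (ι → F)) (d : ℕ) : Prop :=
  IsLeast {w : ℕ | ∃ c ∈ C, c ≠ 0 ∧ hWt c = w} d

/-- The punctured code `C|_S` has minimum distance at least `δ`. -/
def PuncturedDistGE {F : Type} [Field F] [DecidableEq F] {n : ℕ}
    (C : Submodule F (Fin n → F)) (S : Finset (Fin n)) (δ : ℕ) : Prop :=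
  ∀ c ∈ C, (∃ i ∈ S, c i ≠ 0) → δ ≤ (S.filter fun i => c i ≠ 0).card

/-- `C` has all-symbol `(r,δ)` locality. -/
def IsLRC {F : Type} [Field F] [DecidableEq F] {n : ℕ}
    (C : Submodule F (Fin n → F)) (r δ : ℕ) : Prop :=
  ∀ i : Fin n, ∃ S : Finset (Fin n), i ∈ S ∧ S.card ≤ r + δ - 1 ∧ PuncturedDistGE C S δ

/-- `C` is an optimal `(r,δ)_a` linear code of length `n` and dimension `k`:
it has dimension `k`, all-symbol `(r,δ)` locality, and its minimum distance equals
`n - k + 1 - (⌈k/r⌉ - 1)(δ - 1)`. -/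
def IsOptimalLRC {F : Type} [Field F] [DecidableEq F] {n : ℕ}
    (C : Submodule F (Fin n → F)) (k r δ : ℕ) : Prop :=
  Module.finrank F ↥C = k ∧ IsLRC C r δ ∧
  ∃ d : ℕ, IsMinDist C d ∧
    (d : ℤ) = (n : ℤ) - (k : ℤ) + 1 - ((((k + r - 1) / r : ℕ) : ℤ) - 1) * ((δ : ℤ) - 1)


section Aux

open Finset Submodule


lemma avoid_lemma {F V : Type} [Field F] [Fintype F] [Fintype V] [DecidableEq V]
    [AddCommGroup V] [Module F V]
    (W : Submodule F V) (Ss : Finset (Submodule F V))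
    (hS : ∀ p ∈ Ss, ¬ W ≤ p) (hc : Ss.card < Fintype.card F) :
    ∃ v ∈ W, ∀ p ∈ Ss, v ∉ p := by
  classical
  by_contra hcon
  push_neg at hcon
  -- hcon : ∀ v ∈ W, ∃ p ∈ Ss, v ∈ p
  have hne : Ss.Nonempty := by
    rcases Ss.eq_empty_or_nonempty with h | h
    · subst h
      exact absurd (hcon 0 W.zero_mem) (by simp)
    · exact h
  have hWbot : W ≠ ⊥ := by
    intro hb
    obtain ⟨p, hp⟩ := hne
    exact hS p hp (hb ▸ bot_le)
  have hfr1 : 1 ≤ Module.finrank F W := by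
    rw [Nat.one_le_iff_ne_zero]
    intro h0
    exact hWbot (Submodule.finrank_eq_zero.mp h0)
  set q := Fintype.card F with hq
  have hsub : (Finset.univ.filter (· ∈ W)) ⊆
      Ss.biUnion (fun p => Finset.univ.filter (fun v => v ∈ W ⊓ p)) := by
    intro v hv
    simp only [mem_filter, mem_univ, true_and] at hv
    obtain ⟨p, hp, hvp⟩ := hcon v hv
    simp only [mem_biUnion]
    exact ⟨p, hp, by simp [Submodule.mem_inf, hv, hvp]⟩
  have hcard1 : ∀ p : Submodule F V, (Finset.univ.filter (· ∈ p)).card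
      = q ^ Module.finrank F p := by
    intro p
    rw [← Fintype.card_subtype, hq]
    exact Module.card_eq_pow_finrank
  have hterm : ∀ p ∈ Ss, (Finset.univ.filter (fun v => v ∈ W ⊓ p)).card
      ≤ q ^ (Module.finrank F W - 1) := by
    intro p hp
    rw [hcard1]
    apply Nat.pow_le_pow_right (Fintype.card_pos)
    have hlt : W ⊓ p < W := by
      rcases lt_or_eq_of_le (inf_le_left : W ⊓ p ≤ W) with h | h
      · exact h
      · exact absurd (h ▸ inf_le_right : W ≤ p) (hS p hp)
    have := Submodule.finrank_lt_finrank_of_lt hlt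
    omega
  have hbig : q ^ Module.finrank F W ≤ Ss.card * q ^ (Module.finrank F W - 1) := by
    calc q ^ Module.finrank F W = (Finset.univ.filter (· ∈ W)).card := (hcard1 W).symm
    _ ≤ (Ss.biUnion (fun p => Finset.univ.filter (fun v => v ∈ W ⊓ p))).card :=
        Finset.card_le_card hsub
    _ ≤ ∑ p ∈ Ss, (Finset.univ.filter (fun v => v ∈ W ⊓ p)).card := Finset.card_biUnion_le
    _ ≤ ∑ p ∈ Ss, q ^ (Module.finrank F W - 1) := Finset.sum_le_sum hterm
    _ = Ss.card * q ^ (Module.finrank F W - 1) := by rw [Finset.sum_const, smul_eq_mul]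
  have : q ^ Module.finrank F W < q * q ^ (Module.finrank F W - 1) := by
    calc q ^ Module.finrank F W ≤ Ss.card * q ^ (Module.finrank F W - 1) := hbig
    _ < q * q ^ (Module.finrank F W - 1) := by
        exact (Nat.mul_lt_mul_right (pow_pos Fintype.card_pos _)).mpr hc
  rw [← pow_succ'] at this
  have heq : Module.finrank F W - 1 + 1 = Module.finrank F W := by omega
  rw [heq] at this
  exact lt_irrefl _ this


variable {n t : ℕ}

lemma group_unique (S : Fin t → Finset (Fin n))
    (hdisj : ∀ i j : Fin t, i ≠ j → Disjoint (S i) (S j))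
    {x : Fin n} {i j : Fin t} (hi : x ∈ S i) (hj : x ∈ S j) : i = j := by
  by_contra hne
  exact (Finset.disjoint_left.mp (hdisj i j hne)) hi hj

lemma card_eq_sum_groups (S : Fin t → Finset (Fin n))
    (hdisj : ∀ i j : Fin t, i ≠ j → Disjoint (S i) (S j))
    (hcover : Finset.univ.biUnion S = Finset.univ)
    (E : Finset (Fin n)) : E.card = ∑ i, (E ∩ S i).card := by
  classical
  have hE : E = Finset.univ.biUnion (fun i => E ∩ S i) := by
    apply Finset.ext
    intro x
    simp only [mem_biUnion, mem_univ, true_and, mem_inter]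
    constructor
    · intro hx
      have : x ∈ Finset.univ.biUnion S := by rw [hcover]; exact mem_univ x
      obtain ⟨i, _, hi⟩ := mem_biUnion.mp this
      exact ⟨i, hx, hi⟩
    · rintro ⟨i, hx, _⟩
      exact hx
  conv_lhs => rw [hE]
  exact Finset.card_biUnion (fun i _ j _ hij =>
    Finset.disjoint_of_subset_left inter_subset_right
      (Finset.disjoint_of_subset_right inter_subset_right (hdisj i j hij)))

lemma select_lemma (S : Fin t → Finset (Fin n))
    (hdisj : ∀ i j : Fin t, i ≠ j → Disjoint (S i) (S j))
    (c : Fin t → ℕ) (A : Finset (Fin n)) (τ : ℕ)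
    (hτ : τ ≤ ∑ i, min (c i) ((A ∩ S i).card)) :
    ∃ E ⊆ A, E.card = τ ∧ ∀ i, ((E ∩ S i).card ≤ c i) := by
  classical
  have hBex : ∀ i : Fin t, ∃ B ⊆ A ∩ S i, B.card = min (c i) ((A ∩ S i).card) :=
    fun i => Finset.exists_subset_card_eq (min_le_right _ _)
  choose B hB hBcard using hBex
  set E₁ := Finset.univ.biUnion B with hE₁
  have hBS : ∀ i, B i ⊆ S i := fun i => (hB i).trans inter_subset_right
  have hE₁card : E₁.card = ∑ i, min (c i) ((A ∩ S i).card) := by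
    rw [hE₁, Finset.card_biUnion]
    · exact Finset.sum_congr rfl (fun i _ => hBcard i)
    · intro i _ j _ hij
      exact Finset.disjoint_of_subset_left (hBS i)
        (Finset.disjoint_of_subset_right (hBS j) (hdisj i j hij))
  obtain ⟨E, hEsub, hEcard⟩ := Finset.exists_subset_card_eq (s := E₁) (n := τ)
    (by rw [hE₁card]; exact hτ)
  refine ⟨E, ?_, hEcard, ?_⟩
  · refine hEsub.trans ?_
    intro x hx
    obtain ⟨i, _, hi⟩ := mem_biUnion.mp hx
    exact (Finset.mem_inter.mp (hB i hi)).1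
  · intro i
    have hsub : E ∩ S i ⊆ B i := by
      intro x hx
      rw [mem_inter] at hx
      obtain ⟨l, _, hl⟩ := mem_biUnion.mp (hEsub hx.1)
      have : l = i := group_unique S hdisj (hBS l hl) hx.2
      exact this ▸ hl
    calc (E ∩ S i).card ≤ (B i).card := Finset.card_le_card hsub
    _ ≤ c i := by rw [hBcard i]; exact min_le_left _ _


set_option linter.unusedSectionVars false
variable {F : Type} [Field F] [DecidableEq F] {n k : ℕ}

/-- Hands-on linear independence of the columns indexed by `E`. -/
def HIndep (g : Fin n → (Fin k → F)) (E : Finset (Fin n)) : Prop :=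
  ∀ c : Fin n → F, (∀ j ∉ E, c j = 0) → (∑ j, c j • g j) = 0 → ∀ j, c j = 0

lemma HIndep.linearIndependent {g : Fin n → (Fin k → F)} {E : Finset (Fin n)}
    (h : HIndep g E) : LinearIndependent F (fun j : {x // x ∈ E} => g j) := by
  classical
  rw [Fintype.linearIndependent_iff]
  intro f hsum j
  set cc : Fin n → F := fun x => if hx : x ∈ E then f ⟨x, hx⟩ else 0 with hcc
  have hzero : ∀ x ∉ E, cc x = 0 := by
    intro x hx
    simp only [hcc, dif_neg hx]
  have hsum2 : (∑ x, cc x • g x) = 0 := by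
    have h1 : (∑ x, cc x • g x) = ∑ x ∈ E, cc x • g x := by
      rw [← Finset.sum_subset (Finset.subset_univ E)]
      intro x _ hx
      rw [hzero x hx, zero_smul]
    have h2 : (∑ x ∈ E, cc x • g x) = ∑ j : {x // x ∈ E}, f j • g ↑j := by
      rw [← Finset.sum_coe_sort E (fun x => cc x • g x)]
      apply Finset.sum_congr rfl
      intro x _
      simp only [hcc, dif_pos x.2]
    rw [h1, h2, hsum]
  have := h cc hzero hsum2 j
  simpa only [hcc, dif_pos j.2] using this

lemma HIndep.finrank_span {g : Fin n → (Fin k → F)} {E : Finset (Fin n)}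
    (h : HIndep g E) :
    Module.finrank F (span F (g '' ↑E)) = E.card := by
  classical
  have h1 := finrank_span_eq_card h.linearIndependent
  have h2 : Set.range (fun j : {x // x ∈ E} => g ↑j) = g '' ↑E := by
    ext v
    simp [Set.mem_image]
  rw [h2] at h1
  rw [h1, Fintype.card_coe]

lemma HIndep.span_eq_top {g : Fin n → (Fin k → F)} {E : Finset (Fin n)}
    (h : HIndep g E) (hcard : E.card = k) :
    span F (g '' ↑E) = ⊤ := by
  apply Submodule.eq_top_of_finrank_eq
  rw [h.finrank_span, hcard, Module.finrank_pi, Fintype.card_fin]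

/-- The linear functional `v ↦ ∑ s, x s * v s`. -/
def dotL (x : Fin k → F) : (Fin k → F) →ₗ[F] F :=
  ∑ s, x s • LinearMap.proj s

lemma dotL_apply (x v : Fin k → F) : dotL x v = ∑ s, x s * v s := by
  simp [dotL, smul_eq_mul]

lemma finrank_span_image_le (g : Fin n → (Fin k → F)) (E : Finset (Fin n)) :
    Module.finrank F (span F (g '' ↑E)) ≤ E.card := by
  classical
  have h1 : g '' ↑E = ↑(E.image g) := by rw [Finset.coe_image]
  rw [h1]
  have h2 : Module.finrank F (span F (↑(E.image g) : Set (Fin k → F))) ≤ (E.image g).card :=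
    finrank_span_finset_le_card _
  exact h2.trans Finset.card_image_le



lemma sum_smul_update_eq {g : Fin n → (Fin k → F)} {c : Fin n → F} {j : Fin n}
    {v : Fin k → F} (hcj : c j = 0) :
    (∑ x, c x • Function.update g j v x) = ∑ x, c x • g x := by
  apply Finset.sum_congr rfl
  intro x _
  by_cases hx : x = j
  · subst hx; rw [hcj, zero_smul, zero_smul]
  · rw [Function.update_of_ne hx]

lemma HIndep.update_of_not_mem {g : Fin n → (Fin k → F)} {E : Finset (Fin n)}
    {j : Fin n} {v : Fin k → F} (hj : j ∉ E) (h : HIndep g E) :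
    HIndep (Function.update g j v) E := by
  intro c hc hsum
  apply h c hc
  rwa [sum_smul_update_eq (hc j hj)] at hsum

/-- If the new column avoids the span of `E'` (a superset of the support minus `j`),
and the old columns were independent on `E.erase j`, independence extends. -/
lemma HIndep.insert_step {g : Fin n → (Fin k → F)} {E E'' : Finset (Fin n)}
    {j : Fin n} {v : Fin k → F}
    (hjE : j ∈ E) (hsub : E.erase j ⊆ E'')  (hjE'' : j ∉ E'')
    (hv : v ∉ span F (g '' ↑E''))
    (hind : HIndep g (E.erase j)) :
    HIndep (Function.update g j v) E := by
  classical
  intro c hc hsum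
  have hcj : c j = 0 := by
    by_contra hcj
    apply hv
    have hsplit : c j • v + ∑ x ∈ Finset.univ.erase j, c x • Function.update g j v x = 0 := by
      rw [← hsum]
      have := Finset.add_sum_erase Finset.univ
        (fun x => c x • Function.update g j v x) (Finset.mem_univ j)
      rw [← this]
      simp only [Function.update_self]
    have hmem : (∑ x ∈ Finset.univ.erase j, c x • Function.update g j v x)
        ∈ span F (g '' ↑E'') := by
      apply Submodule.sum_mem
      intro x hx
      have hxj : x ≠ j := (Finset.mem_erase.mp hx).1
      rw [Function.update_of_ne hxj]
      by_cases hxE : x ∈ E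
      · have : x ∈ E'' := hsub (Finset.mem_erase.mpr ⟨hxj, hxE⟩)
        exact Submodule.smul_mem _ _ (Submodule.subset_span
          (Set.mem_image_of_mem g (Finset.mem_coe.mpr this)))
      · rw [hc x hxE, zero_smul]; exact Submodule.zero_mem _
    have hv' : c j • v = -(∑ x ∈ Finset.univ.erase j, c x • Function.update g j v x) := by
      linear_combination (norm := module) hsplit
    have : v = (c j)⁻¹ • (c j • v) := by
      rw [smul_smul, inv_mul_cancel₀ hcj, one_smul]
    rw [this, hv']
    exact Submodule.smul_mem _ _ (Submodule.neg_mem _ hmem)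
  -- now c j = 0, reduce to independence on E.erase j
  have hc' : ∀ x ∉ E.erase j, c x = 0 := by
    intro x hx
    by_cases hxj : x = j
    · subst hxj; exact hcj
    · exact hc x (fun hxE => hx (Finset.mem_erase.mpr ⟨hxj, hxE⟩))
  exact hind c hc' (by rwa [sum_smul_update_eq hcj] at hsum)



lemma card_le_pred {j : Fin n} {D : Finset (Fin n)} (hj : j ∉ D) : D.card ≤ n - 1 := by
  have hsub : D ⊆ Finset.univ.erase j := fun x hx =>
    Finset.mem_erase.mpr ⟨fun h => hj (h ▸ hx), Finset.mem_univ x⟩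
  have := Finset.card_le_card hsub
  rwa [Finset.card_erase_of_mem (Finset.mem_univ j), Finset.card_univ,
    Fintype.card_fin] at this

lemma phase1 [Fintype F] (hk1 : 1 ≤ k) (hkn : k ≤ n)
    (hqn : (n-1).choose (k-1) < Fintype.card F) :
    ∀ D : Finset (Fin n), ∃ g : Fin n → (Fin k → F),
      ∀ E ⊆ D, E.card ≤ k → HIndep g E := by
  classical
  intro D
  induction D using Finset.induction_on with
  | empty =>
    refine ⟨fun _ => 0, fun E hE _ => ?_⟩
    intro c hc _ j
    exact hc j (fun hj => Finset.notMem_empty j (hE hj))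
  | @insert j D hjD ih =>
    obtain ⟨g, hg⟩ := ih
    set s := min D.card (k-1) with hs
    set Fam := (D.powersetCard s).image
      (fun E : Finset (Fin n) => span F (g '' (E : Set (Fin n)))) with hFam
    have hSprop : ∀ p ∈ Fam, ¬ (⊤ : Submodule F (Fin k → F)) ≤ p := by
      intro p hp hle
      obtain ⟨E'', hE'', rfl⟩ := Finset.mem_image.mp hp
      rw [Finset.mem_powersetCard] at hE''
      have h1 : Module.finrank F (span F (g '' ↑E'')) ≤ E''.card :=
        finrank_span_image_le g E''
      have h2 : span F (g '' ↑E'') = ⊤ := top_le_iff.mp hle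
      rw [h2] at h1
      rw [finrank_top, Module.finrank_pi, Fintype.card_fin] at h1
      have : E''.card ≤ k - 1 := hE''.2 ▸ (min_le_right _ _)
      omega
    have hcount : Fam.card < Fintype.card F := by
      calc Fam.card ≤ (D.powersetCard s).card := Finset.card_image_le
      _ = D.card.choose s := Finset.card_powersetCard s D
      _ ≤ (n-1).choose (k-1) := by
          rcases le_or_gt D.card (k-1) with h | h
          · have : s = D.card := by omega
            rw [this, Nat.choose_self]
            exact Nat.one_le_iff_ne_zero.mpr (Nat.choose_pos (by omega : k - 1 ≤ n - 1)).ne'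
          · have hsk : s = k - 1 := by omega
            rw [hsk]
            exact Nat.choose_le_choose _ (card_le_pred hjD)
      _ < Fintype.card F := hqn
    obtain ⟨v, -, hv⟩ := avoid_lemma (⊤ : Submodule F (Fin k → F)) Fam hSprop hcount
    refine ⟨Function.update g j v, ?_⟩
    intro E hE hEcard
    by_cases hjE : j ∈ E
    · -- use insert_step
      have hE' : E.erase j ⊆ D := by
        intro x hx
        obtain ⟨hxj, hxE⟩ := Finset.mem_erase.mp hx
        rcases Finset.mem_insert.mp (hE hxE) with h | h
        · exact absurd h hxj
        · exact h
      have hcard' : (E.erase j).card ≤ s := by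
        have h1 : (E.erase j).card = E.card - 1 := Finset.card_erase_of_mem hjE
        have h2 : (E.erase j).card ≤ D.card := Finset.card_le_card hE'
        omega
      obtain ⟨E'', hsub'', hsubD, hcard''⟩ :=
        Finset.exists_subsuperset_card_eq hE' hcard' (by omega : s ≤ D.card)
      have hp : span F (g '' ↑E'') ∈ Fam := by
        rw [hFam]
        exact Finset.mem_image_of_mem _ (Finset.mem_powersetCard.mpr ⟨hsubD, hcard''⟩)
      exact HIndep.insert_step hjE hsub'' (fun h => hjD (hsubD h)) (hv _ hp)
        (hg _ hE' (by omega))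
    · have hED : E ⊆ D := fun x hx => by
        rcases Finset.mem_insert.mp (hE hx) with h | h
        · exact absurd (h ▸ hx) hjE
        · exact h
      exact (hg E hED hEcard).update_of_not_mem hjE




lemma phase2 [Fintype F] {t : ℕ}
    (S : Fin t → Finset (Fin n)) (b : Fin t → ℕ) (T : Fin t → Finset (Fin n))
    (hdisj : ∀ i j : Fin t, i ≠ j → Disjoint (S i) (S j))
    (hcover : Finset.univ.biUnion S = Finset.univ)
    (hTsub : ∀ i, T i ⊆ S i) (hTcard : ∀ i, (T i).card = b i)
    (hb1 : ∀ i, 1 ≤ b i)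
    (hBk : k ≤ ∑ i, b i)
    (hk1 : 1 ≤ k) (hkn : k ≤ n)
    (hqn : (n-1).choose (k-1) < Fintype.card F) :
    ∃ g : Fin n → (Fin k → F),
      (∀ E : Finset (Fin n), E.card ≤ k → (∀ i, ((E ∩ S i).card ≤ b i)) → HIndep g E) ∧
      (∀ i : Fin t, ∀ x ∈ S i, g x ∈ span F (g '' ((T i : Finset (Fin n)) : Set (Fin n)))) := by
  classical
  set P : Finset (Fin n) := Finset.univ.biUnion T with hP
  have hTP : ∀ i, T i ⊆ P := fun i => Finset.subset_biUnion_of_mem T (Finset.mem_univ i)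
  have hPinter : ∀ i, ∀ x ∈ P ∩ S i, x ∈ T i := by
    intro i x hx
    rw [Finset.mem_inter] at hx
    obtain ⟨l, -, hl⟩ := Finset.mem_biUnion.mp hx.1
    have : l = i := group_unique S hdisj (hTsub l hl) hx.2
    exact this ▸ hl
  have main : ∀ D : Finset (Fin n), ∃ g : Fin n → (Fin k → F),
      (∀ E ⊆ P ∪ D, E.card ≤ k → (∀ i, ((E ∩ S i).card ≤ b i)) → HIndep g E) ∧
      (∀ i : Fin t, ∀ x ∈ (P ∪ D) ∩ S i,
        g x ∈ span F (g '' ((T i : Finset (Fin n)) : Set (Fin n)))) := by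
    intro D
    induction D using Finset.induction_on with
    | empty =>
      obtain ⟨g, hg⟩ := phase1 (F := F) hk1 hkn hqn P
      rw [Finset.union_empty]
      refine ⟨g, fun E hE hcard _ => hg E hE hcard, ?_⟩
      intro i x hx
      exact Submodule.subset_span (Set.mem_image_of_mem g (hPinter i x hx))
    | @insert j D hjD ih =>
      obtain ⟨g, hind, hmem⟩ := ih
      by_cases hjP : j ∈ P ∪ D
      · have heq : P ∪ insert j D = P ∪ D := by
          rw [Finset.union_insert, Finset.insert_eq_self.mpr hjP]
        rw [heq]
        exact ⟨g, hind, hmem⟩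
      · -- main greedy step
        have hcoverj : j ∈ Finset.univ.biUnion S := by rw [hcover]; exact Finset.mem_univ j
        obtain ⟨i, -, hji⟩ := Finset.mem_biUnion.mp hcoverj
        set caps : Fin t → ℕ := fun l => if l = i then b i - 1 else b l with hcaps
        have hcapsi : caps i = b i - 1 := by simp [hcaps]
        have hcapsne : ∀ l, l ≠ i → caps l = b l := fun l hl => by simp [hcaps, hl]
        have hcapsle : ∀ l, caps l ≤ b l := by
          intro l
          by_cases hl : l = i
          · subst hl; rw [hcapsi]; omega
          · rw [hcapsne l hl]
        set Fam := (((P ∪ D).powersetCard (k-1)).filter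
            (fun E => ∀ l, (E ∩ S l).card ≤ caps l)).image
          (fun E : Finset (Fin n) => span F (g '' (E : Set (Fin n)))) with hFam
        set W := span F (g '' ((T i : Finset (Fin n)) : Set (Fin n))) with hW
        have hSprop : ∀ p ∈ Fam, ¬ W ≤ p := by
          intro p hp hle
          obtain ⟨E'', hE''mem, rfl⟩ := Finset.mem_image.mp hp
          rw [Finset.mem_filter, Finset.mem_powersetCard] at hE''mem
          obtain ⟨⟨hE''sub, hE''card⟩, hE''bounds⟩ := hE''mem
          -- find x₀ ∈ T i \ E''
          have hx0 : ∃ x₀ ∈ T i, x₀ ∉ E'' := by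
            by_contra hcon
            push_neg at hcon
            have hsub : T i ⊆ E'' ∩ S i := fun x hx =>
              Finset.mem_inter.mpr ⟨hcon x hx, hTsub i hx⟩
            have := Finset.card_le_card hsub
            have hci := hE''bounds i
            rw [hcapsi] at hci
            have := hb1 i
            have := hTcard i
            omega
          obtain ⟨x₀, hx₀T, hx₀E⟩ := hx0
          have hgx₀ : g x₀ ∈ span F (g '' (E'' : Set (Fin n))) :=
            hle (Submodule.subset_span (Set.mem_image_of_mem g hx₀T))
          rw [Finsupp.mem_span_image_iff_linearCombination] at hgx₀
          obtain ⟨l, hlsupp, hlsum⟩ := hgx₀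
          have hlzero : ∀ x ∉ E'', l x = 0 := by
            intro x hx
            exact (Finsupp.mem_supported' F l).mp hlsupp x (by simpa using hx)
          set cc : Fin n → F := fun x => if x = x₀ then (-1 : F) else l x with hcc
          have hE3ind : HIndep g (insert x₀ E'') := by
            apply hind
            · intro x hx
              rcases Finset.mem_insert.mp hx with h | h
              · exact Finset.mem_union_left D (hTP i (h ▸ hx₀T))
              · exact hE''sub h
            · have := Finset.card_insert_le x₀ E''
              omega
            · intro m
              by_cases hmi : m = i
              · subst hmi
                have h1 : insert x₀ E'' ∩ S m ⊆ insert x₀ (E'' ∩ S m) := by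
                  intro x hx
                  rw [Finset.mem_inter] at hx
                  rcases Finset.mem_insert.mp hx.1 with h | h
                  · exact Finset.mem_insert.mpr (Or.inl h)
                  · exact Finset.mem_insert.mpr (Or.inr (Finset.mem_inter.mpr ⟨h, hx.2⟩))
                have h2 := Finset.card_le_card h1
                have h3 := Finset.card_insert_le x₀ (E'' ∩ S m)
                have h4 := hE''bounds m
                rw [hcapsi] at h4
                have := hb1 m
                omega
              · have h1 : insert x₀ E'' ∩ S m ⊆ E'' ∩ S m := by
                  intro x hx
                  rw [Finset.mem_inter] at hx
                  rcases Finset.mem_insert.mp hx.1 with h | h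
                  · exfalso
                    exact hmi (group_unique S hdisj (h ▸ hx.2) (hTsub i hx₀T))
                  · exact Finset.mem_inter.mpr ⟨h, hx.2⟩
                have h2 := Finset.card_le_card h1
                have h4 := hE''bounds m
                rw [hcapsne m hmi] at h4
                omega
          have hccsupp : ∀ x ∉ insert x₀ E'', cc x = 0 := by
            intro x hx
            rw [Finset.mem_insert] at hx
            push_neg at hx
            rw [hcc]
            simp only [if_neg hx.1]
            exact hlzero x hx.2
          have hccsum : (∑ x, cc x • g x) = 0 := by
            have hsplit := Finset.add_sum_erase Finset.univ (fun x => cc x • g x)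
              (Finset.mem_univ x₀)
            have h1 : ∀ x ∈ Finset.univ.erase x₀, cc x • g x = l x • g x := by
              intro x hx
              rw [hcc]
              simp only [if_neg (Finset.mem_erase.mp hx).1]
            have h2 : (∑ x ∈ Finset.univ.erase x₀, l x • g x) = ∑ x, l x • g x := by
              rw [← Finset.add_sum_erase Finset.univ (fun x => l x • g x)
                (Finset.mem_univ x₀), hlzero x₀ hx₀E, zero_smul, zero_add]
            have h3 : (∑ x, l x • g x) = g x₀ := by
              rw [← hlsum, Finsupp.linearCombination_apply,
                Finsupp.sum_fintype _ _ (fun x => zero_smul F (g x))]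
            calc (∑ x, cc x • g x)
                = cc x₀ • g x₀ + ∑ x ∈ Finset.univ.erase x₀, cc x • g x := hsplit.symm
              _ = cc x₀ • g x₀ + ∑ x ∈ Finset.univ.erase x₀, l x • g x :=
                  by rw [Finset.sum_congr rfl h1]
              _ = cc x₀ • g x₀ + g x₀ := by rw [h2, h3]
              _ = 0 := by
                  rw [hcc]
                  simp
          have := hE3ind cc hccsupp hccsum x₀
          rw [hcc] at this
          simp at this
        have hcount : Fam.card < Fintype.card F := by
          calc Fam.card ≤ (((P ∪ D).powersetCard (k-1)).filter
              (fun E => ∀ l, (E ∩ S l).card ≤ caps l)).card := Finset.card_image_le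
          _ ≤ ((P ∪ D).powersetCard (k-1)).card := Finset.card_filter_le _ _
          _ = (P ∪ D).card.choose (k-1) := Finset.card_powersetCard _ _
          _ ≤ (n-1).choose (k-1) := Nat.choose_le_choose _ (card_le_pred hjP)
          _ < Fintype.card F := hqn
        obtain ⟨v, hvW, hv⟩ := avoid_lemma W Fam hSprop hcount
        refine ⟨Function.update g j v, ?_, ?_⟩
        · -- independence part
          rw [Finset.union_insert]
          intro E hE hEcard hEbounds
          by_cases hjE : j ∈ E
          · set E' := E.erase j with hE'def
            have hE'sub : E' ⊆ P ∪ D := by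
              intro x hx
              obtain ⟨hxj, hxE⟩ := Finset.mem_erase.mp hx
              rcases Finset.mem_insert.mp (hE hxE) with h | h
              · exact absurd h hxj
              · exact h
            have hE'card : E'.card ≤ k - 1 := by
              rw [hE'def, Finset.card_erase_of_mem hjE]
              omega
            have hE'bounds : ∀ l, (E' ∩ S l).card ≤ caps l := by
              intro l
              by_cases hli : l = i
              · subst hli
                rw [hE'def, Finset.erase_inter, Finset.card_erase_of_mem
                  (Finset.mem_inter.mpr ⟨hjE, hji⟩), hcapsi]
                have := hEbounds l
                omega
              · rw [hcapsne l hli]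
                calc (E' ∩ S l).card ≤ (E ∩ S l).card :=
                    Finset.card_le_card (Finset.inter_subset_inter
                      (Finset.erase_subset j E) (le_refl (S l)))
                _ ≤ b l := hEbounds l
            -- extend E' to a set E'' of card k-1 inside P ∪ D with caps bounds
            have hAvail : ∀ l, caps l - (E' ∩ S l).card ≤ (((P \ E') ∩ S l)).card := by
              intro l
              have hsub2 : T l \ E' ⊆ (P \ E') ∩ S l := by
                intro x hx
                rw [Finset.mem_sdiff] at hx
                exact Finset.mem_inter.mpr ⟨Finset.mem_sdiff.mpr ⟨hTP l hx.1, hx.2⟩,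
                  hTsub l hx.1⟩
              have h1 := Finset.card_le_card hsub2
              have h2 := Finset.card_sdiff_add_card_inter (T l) E'
              have h3 : (T l ∩ E').card ≤ (E' ∩ S l).card := by
                apply Finset.card_le_card
                intro x hx
                rw [Finset.mem_inter] at hx
                exact Finset.mem_inter.mpr ⟨hx.2, hTsub l hx.1⟩
              have h4 := hTcard l
              have h5 := hcapsle l
              omega
            have hcapsum : (k - 1) ≤ ∑ l, caps l + ∑ l, (E' ∩ S l).card
                - ∑ l, (E' ∩ S l).card := by
              -- ∑ caps = ∑ b - 1 ≥ k - 1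
              have h1 : ∑ l, caps l + 1 = ∑ l, b l := by
                have hupd : caps = Function.update b i (b i - 1) := by
                  funext l
                  rw [Function.update_apply, hcaps]
                have h2 : (∑ l, Function.update b i (b i - 1) l)
                    = (b i - 1) + ∑ l ∈ Finset.univ \ {i}, b l :=
                  Finset.sum_update_of_mem (Finset.mem_univ i) b (b i - 1)
                have h3 : b i + ∑ l ∈ Finset.univ.erase i, b l = ∑ l, b l :=
                  Finset.add_sum_erase Finset.univ b (Finset.mem_univ i)
                have h4 : Finset.univ \ {i} = Finset.univ.erase i := by
                  rw [Finset.sdiff_singleton_eq_erase]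
                rw [hupd, h2, h4]
                have := hb1 i
                omega
              omega
            have hτbound : (k-1) - E'.card ≤
                ∑ l, min (caps l - (E' ∩ S l).card) (((P \ E') ∩ S l)).card := by
              have h1 : ∀ l, min (caps l - (E' ∩ S l).card) (((P \ E') ∩ S l)).card
                  = caps l - (E' ∩ S l).card := fun l => min_eq_left (hAvail l)
              rw [Finset.sum_congr rfl (fun l _ => h1 l)]
              have h2 : ∑ l, caps l ≤ ∑ l, (caps l - (E' ∩ S l).card)
                  + ∑ l, (E' ∩ S l).card := by
                rw [← Finset.sum_add_distrib]
                exact Finset.sum_le_sum (fun l _ => le_tsub_add)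
              have h3 : E'.card = ∑ l, (E' ∩ S l).card :=
                card_eq_sum_groups S hdisj hcover E'
              omega
            obtain ⟨Eo, hEosub, hEocard, hEobounds⟩ := select_lemma S hdisj
              (fun l => caps l - (E' ∩ S l).card) (P \ E') ((k-1) - E'.card) hτbound
            set E'' := E' ∪ Eo with hE''def
            have hdisjE : Disjoint E' Eo := by
              rw [Finset.disjoint_left]
              intro x hx hx'
              exact (Finset.mem_sdiff.mp (hEosub hx')).2 hx
            have hE''card : E''.card = k - 1 := by
              rw [hE''def, Finset.card_union_of_disjoint hdisjE, hEocard]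
              omega
            have hE''subPD : E'' ⊆ P ∪ D := by
              intro x hx
              rcases Finset.mem_union.mp hx with h | h
              · exact hE'sub h
              · exact Finset.mem_union_left D (Finset.mem_sdiff.mp (hEosub h)).1
            have hE''bounds : ∀ l, (E'' ∩ S l).card ≤ caps l := by
              intro l
              rw [hE''def, Finset.union_inter_distrib_right]
              calc ((E' ∩ S l) ∪ (Eo ∩ S l)).card
                  ≤ (E' ∩ S l).card + (Eo ∩ S l).card := Finset.card_union_le _ _
                _ ≤ caps l := by
                    have := hEobounds l
                    have := hE'bounds l
                    omega
            have hp : span F (g '' (E'' : Set (Fin n))) ∈ Fam := by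
              rw [hFam]
              apply Finset.mem_image_of_mem
              rw [Finset.mem_filter, Finset.mem_powersetCard]
              exact ⟨⟨hE''subPD, hE''card⟩, hE''bounds⟩
            apply HIndep.insert_step hjE (Finset.subset_union_left.trans (le_refl E''))
              (fun h => hjP (hE''subPD h)) (hv _ hp)
            apply hind E' hE'sub (by omega)
            intro l
            exact le_trans (hE'bounds l) (hcapsle l)
          · have hED : E ⊆ P ∪ D := fun x hx => by
              rcases Finset.mem_insert.mp (hE hx) with h | h
              · exact absurd (h ▸ hx) hjE
              · exact h
            exact (hind E hED hEcard hEbounds).update_of_not_mem hjE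
        · -- membership part
          rw [Finset.union_insert]
          have hjnP : j ∉ P := fun h => hjP (Finset.mem_union_left D h)
          have himg : ∀ l, Function.update g j v '' ((T l : Finset (Fin n)) : Set (Fin n))
              = g '' ((T l : Finset (Fin n)) : Set (Fin n)) := by
            intro l
            apply Set.image_congr
            intro x hx
            have hxj : x ≠ j := fun h => hjnP (h ▸ hTP l (Finset.mem_coe.mp hx))
            exact Function.update_of_ne hxj v g
          intro l x hx
          rw [Finset.mem_inter] at hx
          rcases Finset.mem_insert.mp hx.1 with h | h
          · subst h
            have hli : l = i := group_unique S hdisj hx.2 hji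
            subst hli
            rw [himg l, Function.update_self]
            exact hvW
          · have hxj : x ≠ j := fun hh => hjP (hh ▸ h)
            rw [himg l, Function.update_of_ne hxj]
            exact hmem l x (Finset.mem_inter.mpr ⟨h, hx.2⟩)
  obtain ⟨g, hind, hmem⟩ := main Finset.univ
  refine ⟨g, ?_, ?_⟩
  · intro E hcard hbounds
    exact hind E (fun x _ => Finset.mem_union_right P (Finset.mem_univ x)) hcard hbounds
  · intro i x hx
    exact hmem i x (Finset.mem_inter.mpr
      ⟨Finset.mem_union_right P (Finset.mem_univ x), hx⟩)

end Aux

open Finset Submodule in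
/-- Theorem `opt-suf-1`: let `{S_1,…,S_t}` be a partition of `[n]` with
`δ ≤ |S_i| ≤ r+δ-1`, `t ≥ ⌈k/r⌉`, and `|∪_{i∈J} S_i| ≥ k + ⌈k/r⌉(δ-1)` for every
`J ⊆ [t]` with `|J| = ⌈k/r⌉`. Then over every finite field of size at least
`C(n, k-1)` there exists an optimal `(r,δ)_a` linear code of length `n`, dimension `k`. -/
theorem statement11 {n k r δ t : ℕ} (hk1 : 1 ≤ k) (hkn : k ≤ n) (hr1 : 1 ≤ r)
    (hrk : r ≤ k) (hδ : 2 ≤ δ)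
    (S : Fin t → Finset (Fin n))
    (hdisj : ∀ i j : Fin t, i ≠ j → Disjoint (S i) (S j))
    (hcover : Finset.univ.biUnion S = Finset.univ)
    (hcard : ∀ i : Fin t, δ ≤ (S i).card ∧ (S i).card ≤ r + δ - 1)
    (ht : (k + r - 1) / r ≤ t)
    (hJ : ∀ J : Finset (Fin t), J.card = (k + r - 1) / r →
      k + ((k + r - 1) / r) * (δ - 1) ≤ (J.biUnion S).card) :
    ∀ (F : Type) [Field F] [Fintype F] [DecidableEq F],
      n.choose (k - 1) ≤ Fintype.card F →
      ∃ C : Submodule F (Fin n → F), IsOptimalLRC C k r δ := by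
  intro F _ _ _ hq
  classical
  obtain ⟨m, hm⟩ : ∃ m', (k + r - 1) / r = m' := ⟨_, rfl⟩
  rw [hm] at ht hJ
  -- arithmetic facts about m
  have hr0 : 0 < r := hr1
  have hdm : r * m + (k + r - 1) % r = k + r - 1 := by rw [← hm]; exact Nat.div_add_mod _ _
  have hmod : (k + r - 1) % r < r := Nat.mod_lt _ hr0
  have hm1 : 1 ≤ m := by rw [← hm, Nat.one_le_div_iff hr0]; omega
  have hkm : k ≤ r * m := by omega
  have hmrk : (m - 1) * r ≤ k - 1 := by
    have h1 : (m - 1) * r = r * m - r := by rw [mul_comm r m, Nat.sub_mul, one_mul]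
    omega
  -- groups
  set b : Fin t → ℕ := fun i => (S i).card - (δ - 1) with hb
  have hab : ∀ i, (S i).card = b i + (δ - 1) := by
    intro i; have := (hcard i).1; simp only [hb]; omega
  have hb1 : ∀ i, 1 ≤ b i := by
    intro i; have := (hcard i).1; simp only [hb]; omega
  have hbr : ∀ i, b i ≤ r := by
    intro i; have := (hcard i).2; simp only [hb]; omega
  have hT : ∀ i : Fin t, ∃ Ti ⊆ S i, Ti.card = b i := by
    intro i
    exact Finset.exists_subset_card_eq (by rw [hab i]; omega)
  choose T hTsub hTcard using hT
  have hsumJa : ∀ J : Finset (Fin t), (J.biUnion S).card = ∑ i ∈ J, (S i).card :=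
    fun J => Finset.card_biUnion (fun i _ j _ h => hdisj i j h)
  have hsumJb : ∀ J : Finset (Fin t), J.card = m → k ≤ ∑ i ∈ J, b i := by
    intro J hJcard
    have h1 := hJ J hJcard
    rw [hsumJa J] at h1
    have h2 : ∑ i ∈ J, (S i).card = (∑ i ∈ J, b i) + m * (δ - 1) := by
      rw [Finset.sum_congr rfl (fun i _ => hab i), Finset.sum_add_distrib,
        Finset.sum_const, ← hJcard, smul_eq_mul]
    omega
  have hBk : k ≤ ∑ i, b i := by
    obtain ⟨J, hJsub, hJcard⟩ := Finset.exists_subset_card_eq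
      (s := (Finset.univ : Finset (Fin t))) (n := m)
      (by rw [Finset.card_univ, Fintype.card_fin]; exact ht)
    exact (hsumJb J hJcard).trans (Finset.sum_le_sum_of_subset hJsub)
  have hq2 : 2 ≤ Fintype.card F := Fintype.one_lt_card
  have hqn : (n-1).choose (k-1) < Fintype.card F := by
    rcases eq_or_lt_of_le hk1 with hk | hk
    · rw [← hk]
      simpa using (show 1 < Fintype.card F by omega)
    · obtain ⟨n', hn'⟩ : ∃ n', n = n' + 1 := ⟨n-1, by omega⟩
      obtain ⟨k', hk'⟩ : ∃ k', k = k' + 2 := ⟨k-2, by omega⟩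
      have hpascal : n.choose (k-1) = n'.choose k' + n'.choose (k'+1) := by
        rw [hn', hk']
        have h3 : k' + 2 - 1 = k' + 1 := by omega
        rw [h3, Nat.choose_succ_succ]
      have hpos : 0 < n'.choose k' := Nat.choose_pos (by omega)
      have he1 : n - 1 = n' := by omega
      have he2 : k - 1 = k' + 1 := by omega
      rw [he1, he2]
      omega
  -- the greedy construction
  obtain ⟨g, hind, hmem⟩ := phase2 S b T hdisj hcover hTsub hTcard hb1 hBk hk1 hkn hqn
  set M : Matrix (Fin n) (Fin k) F := Matrix.of (fun j s => g j s) with hM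
  -- generalities about the code
  have hcw : ∀ (x : Fin k → F) (j : Fin n), M.mulVecLin x j = dotL x (g j) := by
    intro x j
    rw [Matrix.mulVecLin_apply, dotL_apply]
    show dotProduct (M j) x = _
    rw [dotProduct]
    exact Finset.sum_congr rfl (fun s _ => mul_comm _ _)
  have hkey : ∀ (x : Fin k → F) (E : Finset (Fin n)), E.card = k →
      (∀ l, ((E ∩ S l).card ≤ b l)) → (∀ j ∈ E, dotL x (g j) = 0) → x = 0 := by
    intro x E hEcard hEb hEperp
    have hindE : HIndep g E := hind E (le_of_eq hEcard) hEb
    have htop := hindE.span_eq_top hEcard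
    have hker : span F (g '' ↑E) ≤ LinearMap.ker (dotL x) := by
      rw [Submodule.span_le]
      rintro v ⟨j, hj, rfl⟩
      exact LinearMap.mem_ker.mpr (hEperp j hj)
    rw [htop] at hker
    funext s
    have h1 : dotL x (Pi.single s 1) = 0 := hker Submodule.mem_top
    rw [dotL_apply, Finset.sum_eq_single s
      (fun b _ hb => by rw [Pi.single_eq_of_ne hb, mul_zero])
      (fun hs => absurd (Finset.mem_univ s) hs)] at h1
    rw [Pi.single_eq_same, mul_one] at h1
    simpa using h1
  have hlegalk : ∃ Ek : Finset (Fin n), Ek.card = k ∧ ∀ l, ((Ek ∩ S l).card ≤ b l) := by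
    obtain ⟨Ek, -, h1, h2⟩ := select_lemma S hdisj b Finset.univ k (by
      have h3 : ∀ l, min (b l) ((Finset.univ ∩ S l).card) = b l := by
        intro l
        rw [Finset.univ_inter]
        exact min_eq_left (by rw [hab l]; omega)
      rw [Finset.sum_congr rfl (fun l _ => h3 l)]
      exact hBk)
    exact ⟨Ek, h1, h2⟩
  have hinj : Function.Injective (M.mulVecLin (R := F)) := by
    rw [← LinearMap.ker_eq_bot, LinearMap.ker_eq_bot']
    intro x hx0
    obtain ⟨Ek, hEkcard, hEkb⟩ := hlegalk
    exact hkey x Ek hEkcard hEkb (fun j hj => by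
      rw [← hcw]
      exact congrFun hx0 j)
  have hwt_split : ∀ c : Fin n → F,
      hWt c + (Finset.univ.filter (fun j => c j = 0)).card = n := by
    intro c
    have h := Finset.card_filter_add_card_filter_not
      (s := (Finset.univ : Finset (Fin n))) (p := fun j => c j ≠ 0)
    have h2 : Finset.univ.filter (fun j => ¬ c j ≠ 0)
        = Finset.univ.filter (fun j => c j = 0) := by
      apply Finset.filter_congr
      intro e _
      exact not_not
    rw [h2, Finset.card_univ, Fintype.card_fin] at h
    exact h
  refine ⟨LinearMap.range M.mulVecLin, ?_, ?_, ?_⟩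
  · -- dimension
    rw [LinearMap.finrank_range_of_inj hinj, Module.finrank_pi, Fintype.card_fin]
  · -- locality
    intro jc
    have hjc : jc ∈ Finset.univ.biUnion S := by rw [hcover]; exact Finset.mem_univ jc
    obtain ⟨i, -, hji⟩ := Finset.mem_biUnion.mp hjc
    refine ⟨S i, hji, (hcard i).2, ?_⟩
    intro c hc hex
    obtain ⟨x, rfl⟩ := LinearMap.mem_range.mp hc
    by_contra hlt
    push_neg at hlt
    set Z := (S i).filter (fun e => M.mulVecLin x e = 0) with hZ
    have hZcard : b i ≤ Z.card := by
      have h1 := Finset.card_filter_add_card_filter_not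
        (s := S i) (p := fun e => M.mulVecLin x e ≠ 0)
      have h2 : (S i).filter (fun e => ¬ M.mulVecLin x e ≠ 0) = Z := by
        apply Finset.filter_congr
        intro e _
        exact not_not
      rw [h2] at h1
      have h3 := hab i
      omega
    obtain ⟨Zb, hZbsub, hZbcard⟩ := Finset.exists_subset_card_eq hZcard
    have hZbS : Zb ⊆ S i := hZbsub.trans (Finset.filter_subset _ _)
    have hZbind : HIndep g Zb := by
      apply hind Zb (by rw [hZbcard]; exact (hbr i).trans hrk)
      intro l
      by_cases hli : l = i
      · subst hli
        calc (Zb ∩ S l).card ≤ Zb.card := Finset.card_le_card Finset.inter_subset_left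
        _ = b l := hZbcard
      · have hempty : Zb ∩ S l ⊆ ∅ := by
          intro y hy
          rw [Finset.mem_inter] at hy
          exact absurd (group_unique S hdisj (hZbS hy.1) hy.2) (fun h => hli h.symm)
        have := Finset.card_le_card hempty
        simp only [Finset.card_empty] at this
        omega
    have hspanZb : span F (g '' (↑Zb : Set (Fin n)))
        = span F (g '' ((T i : Finset (Fin n)) : Set (Fin n))) := by
      apply Submodule.eq_of_le_of_finrank_le
      · rw [Submodule.span_le]
        rintro v ⟨z, hz, rfl⟩
        exact hmem i z (hZbS hz)
      · have h1 := finrank_span_image_le g (T i)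
        rw [hTcard i] at h1
        rw [hZbind.finrank_span, hZbcard]
        exact h1
    have hperp : ∀ e ∈ S i, M.mulVecLin x e = 0 := by
      intro e he
      have h1 : g e ∈ span F (g '' (↑Zb : Set (Fin n))) := by
        rw [hspanZb]
        exact hmem i e he
      have h2 : span F (g '' (↑Zb : Set (Fin n))) ≤ LinearMap.ker (dotL x) := by
        rw [Submodule.span_le]
        rintro v ⟨z, hz, rfl⟩
        apply LinearMap.mem_ker.mpr
        rw [← hcw]
        exact (Finset.mem_filter.mp (hZbsub hz)).2
      rw [hcw]
      exact h2 h1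
    obtain ⟨e0, he0S, he0⟩ := hex
    exact he0 (hperp e0 he0S)
  · -- minimum distance
    have hδ1 : 1 ≤ δ := by omega
    have hX : (m-1) * (δ-1) ≤ m * (δ-1) := Nat.mul_le_mul_right _ (by omega)
    have hnk : k + m * (δ - 1) ≤ n := by
      obtain ⟨J, hJsub, hJcard⟩ := Finset.exists_subset_card_eq
        (s := (Finset.univ : Finset (Fin t))) (n := m)
        (by rw [Finset.card_univ, Fintype.card_fin]; exact ht)
      have h1 := hJ J hJcard
      have h2 : (J.biUnion S).card ≤ n := by
        have h3 := Finset.card_le_univ (J.biUnion S)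
        rwa [Fintype.card_fin] at h3
      omega
    set dstar := n - ((k - 1) + (m - 1) * (δ - 1)) with hdstar
    -- lower bound on weights of nonzero codewords
    have hLB : ∀ x : Fin k → F, x ≠ 0 → dstar ≤ hWt (M.mulVecLin x) := by
      intro x hx0
      set c := M.mulVecLin x with hcdef
      set Z := Finset.univ.filter (fun j => c j = 0) with hZ
      have hwtZ : hWt c + Z.card = n := hwt_split c
      have hsig : (∑ l, min (b l) ((Z ∩ S l).card)) ≤ k - 1 := by
        by_contra hcon
        push_neg at hcon
        obtain ⟨Ek, hEksub, hEkcard, hEkb⟩ := select_lemma S hdisj b Z k (by omega)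
        exact hx0 (hkey x Ek hEkcard hEkb (fun j hj => by
          rw [← hcw]
          exact (Finset.mem_filter.mp (hEksub hj)).2))
      set Z' := Finset.univ.filter (fun l => b l < (Z ∩ S l).card) with hZ'
      have hZ'card : Z'.card ≤ m - 1 := by
        by_contra hcon
        push_neg at hcon
        obtain ⟨J, hJsub, hJcard⟩ := Finset.exists_subset_card_eq
          (s := Z') (n := m) (by omega)
        have h1 : ∀ l ∈ J, b l = min (b l) ((Z ∩ S l).card) := fun l hl =>
          (min_eq_left (le_of_lt (Finset.mem_filter.mp (hJsub hl)).2)).symm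
        have h2 : (∑ l ∈ J, b l) ≤ ∑ l, min (b l) ((Z ∩ S l).card) := by
          rw [Finset.sum_congr rfl h1]
          exact Finset.sum_le_sum_of_subset (Finset.subset_univ J)
        have h3 := hsumJb J hJcard
        omega
      have hZsum : Z.card ≤ (k - 1) + (m - 1) * (δ - 1) := by
        have h1 : Z.card = ∑ l, (Z ∩ S l).card := card_eq_sum_groups S hdisj hcover Z
        have h2 : ∀ l, (Z ∩ S l).card
            ≤ min (b l) ((Z ∩ S l).card) + (if l ∈ Z' then δ - 1 else 0) := by
          intro l
          by_cases hl : l ∈ Z'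
          · rw [if_pos hl]
            have h3 : b l < (Z ∩ S l).card := (Finset.mem_filter.mp hl).2
            have h4 : (Z ∩ S l).card ≤ (S l).card :=
              Finset.card_le_card Finset.inter_subset_right
            have h5 := hab l
            have h6 : min (b l) ((Z ∩ S l).card) = b l := min_eq_left (by omega)
            omega
          · rw [if_neg hl]
            have h3 : ¬ (b l < (Z ∩ S l).card) := fun hcon =>
              hl (Finset.mem_filter.mpr ⟨Finset.mem_univ l, hcon⟩)
            have h6 : min (b l) ((Z ∩ S l).card) = (Z ∩ S l).card :=
              min_eq_right (by omega)
            omega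
        have h7 : Z.card ≤ (∑ l, min (b l) ((Z ∩ S l).card))
            + ∑ l, (if l ∈ Z' then δ - 1 else 0) := by
          rw [h1, ← Finset.sum_add_distrib]
          exact Finset.sum_le_sum (fun l _ => h2 l)
        have h8 : (∑ l, (if l ∈ Z' then δ - 1 else 0)) = Z'.card * (δ - 1) := by
          rw [Finset.sum_ite_mem, Finset.univ_inter, Finset.sum_const, smul_eq_mul]
        have h9 : Z'.card * (δ - 1) ≤ (m - 1) * (δ - 1) :=
          Nat.mul_le_mul_right _ hZ'card
        omega
      omega
    -- construct a codeword of weight exactly dstar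
    obtain ⟨J, hJsub, hJcard⟩ := Finset.exists_subset_card_eq
      (s := (Finset.univ : Finset (Fin t))) (n := m - 1)
      (by rw [Finset.card_univ, Fintype.card_fin]; omega)
    have hJb : (∑ l ∈ J, b l) ≤ k - 1 := by
      calc ∑ l ∈ J, b l ≤ ∑ _l ∈ J, r := Finset.sum_le_sum (fun l _ => hbr l)
      _ = (m-1) * r := by rw [Finset.sum_const, smul_eq_mul, hJcard]
      _ ≤ k - 1 := hmrk
    set A := Finset.univ \ J.biUnion S with hA
    have hScapA : ∀ l, l ∉ J → S l ⊆ A := by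
      intro l hl x hx
      rw [hA, Finset.mem_sdiff]
      refine ⟨Finset.mem_univ x, fun hcon => ?_⟩
      obtain ⟨l', hl', hxl'⟩ := Finset.mem_biUnion.mp hcon
      exact hl ((group_unique S hdisj hx hxl') ▸ hl')
    set cps : Fin t → ℕ := fun l => if l ∈ J then 0 else b l with hcps
    have hcap : ((k-1) - ∑ l ∈ J, b l) ≤ ∑ l, min (cps l) ((A ∩ S l).card) := by
      have h2 : (∑ l ∈ Finset.univ \ J, min (cps l) ((A ∩ S l).card))
          = ∑ l ∈ Finset.univ \ J, b l := by
        apply Finset.sum_congr rfl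
        intro l hl
        have hlJ : l ∉ J := (Finset.mem_sdiff.mp hl).2
        have h3 : S l ⊆ A ∩ S l := fun x hx =>
          Finset.mem_inter.mpr ⟨hScapA l hlJ hx, hx⟩
        have h4 : b l ≤ (A ∩ S l).card := by
          have := Finset.card_le_card h3
          rw [hab l] at this
          omega
        simp only [hcps, if_neg hlJ]
        exact min_eq_left h4
      have h5 := Finset.sum_sdiff (f := b) (Finset.subset_univ J)
      calc ((k-1) - ∑ l ∈ J, b l) ≤ ∑ l ∈ Finset.univ \ J, b l := by omega
      _ = ∑ l ∈ Finset.univ \ J, min (cps l) ((A ∩ S l).card) := h2.symm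
      _ ≤ ∑ l, min (cps l) ((A ∩ S l).card) :=
          Finset.sum_le_sum_of_subset (Finset.sdiff_subset)
    obtain ⟨Eo, hEosub, hEocard, hEob⟩ := select_lemma S hdisj cps A
      ((k-1) - ∑ l ∈ J, b l) hcap
    set Estar := (J.biUnion T) ∪ Eo with hEstar
    have hTBcard : (J.biUnion T).card = ∑ l ∈ J, b l := by
      rw [Finset.card_biUnion (fun i hi j hj hij => Finset.disjoint_of_subset_left
        (hTsub i) (Finset.disjoint_of_subset_right (hTsub j) (hdisj i j hij)))]
      exact Finset.sum_congr rfl (fun l _ => hTcard l)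
    have hEstarcard : Estar.card ≤ k - 1 := by
      calc Estar.card ≤ (J.biUnion T).card + Eo.card := Finset.card_union_le _ _
      _ ≤ k - 1 := by rw [hTBcard, hEocard]; omega
    have hdual : ∃ x : Fin k → F, x ≠ 0 ∧ ∀ e ∈ Estar, dotL x (g e) = 0 := by
      set N : Matrix {e // e ∈ Estar} (Fin k) F := Matrix.of (fun e s => g e.1 s) with hN
      have hnotinj : ¬ Function.Injective (N.mulVecLin (R := F)) := by
        intro hinj2
        have h1 := LinearMap.finrank_le_finrank_of_injective hinj2
        rw [Module.finrank_pi, Module.finrank_pi, Fintype.card_fin,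
          Fintype.card_coe] at h1
        omega
      rw [Function.not_injective_iff] at hnotinj
      obtain ⟨x1, x2, heq, hne⟩ := hnotinj
      refine ⟨x1 - x2, sub_ne_zero.mpr hne, ?_⟩
      intro e he
      have h2 : N.mulVecLin (x1 - x2) = 0 := by rw [map_sub, heq, sub_self]
      have h3 := congrFun h2 ⟨e, he⟩
      rw [Matrix.mulVecLin_apply] at h3
      rw [dotL_apply]
      have h4 : Matrix.mulVec N (x1 - x2) ⟨e, he⟩
          = ∑ s, (x1 - x2) s * g e s := by
        show dotProduct (N ⟨e, he⟩) (x1 - x2) = _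
        rw [dotProduct]
        exact Finset.sum_congr rfl (fun s _ => mul_comm _ _)
      rw [h4] at h3
      exact h3
    obtain ⟨x0, hx0ne, hx0perp⟩ := hdual
    set c0 := M.mulVecLin x0 with hc0
    have hc0ne : c0 ≠ 0 := fun h =>
      hx0ne (hinj (h.trans (map_zero (M.mulVecLin (R := F))).symm))
    have hc0zero : ∀ e ∈ (J.biUnion S) ∪ Eo, c0 e = 0 := by
      intro e he
      rw [hc0, hcw]
      rcases Finset.mem_union.mp he with h | h
      · obtain ⟨l, hl, hel⟩ := Finset.mem_biUnion.mp h
        have h1 : g e ∈ span F (g '' ((T l : Finset (Fin n)) : Set (Fin n))) :=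
          hmem l e hel
        have h2 : span F (g '' ((T l : Finset (Fin n)) : Set (Fin n)))
            ≤ LinearMap.ker (dotL x0) := by
          rw [Submodule.span_le]
          rintro v ⟨z, hz, rfl⟩
          exact LinearMap.mem_ker.mpr (hx0perp z (Finset.mem_union_left _
            (Finset.mem_biUnion.mpr ⟨l, hl, hz⟩)))
        exact h2 h1
      · exact hx0perp e (Finset.mem_union_right _ h)
    have hEcard : ((J.biUnion S) ∪ Eo).card = (k - 1) + (m - 1) * (δ - 1) := by
      have hdisjU : Disjoint (J.biUnion S) Eo := by
        rw [Finset.disjoint_right]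
        intro x hx hcon
        exact (Finset.mem_sdiff.mp (hEosub hx)).2 hcon
      have h1 : ∑ l ∈ J, (S l).card = (∑ l ∈ J, b l) + (m-1) * (δ-1) := by
        rw [Finset.sum_congr rfl (fun l _ => hab l), Finset.sum_add_distrib,
          Finset.sum_const, smul_eq_mul, hJcard]
      rw [Finset.card_union_of_disjoint hdisjU, hsumJa J, h1, hEocard]
      omega
    have hwtUB : hWt c0 ≤ dstar := by
      have h1 : ((J.biUnion S) ∪ Eo) ⊆ Finset.univ.filter (fun j => c0 j = 0) :=
        fun e he => Finset.mem_filter.mpr ⟨Finset.mem_univ e, hc0zero e he⟩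
      have h2 := Finset.card_le_card h1
      have h3 := hwt_split c0
      rw [hEcard] at h2
      omega
    have hwtEQ : hWt c0 = dstar := le_antisymm hwtUB (hLB x0 hx0ne)
    refine ⟨dstar, ⟨⟨c0, LinearMap.mem_range_self _ x0, hc0ne, hwtEQ⟩, ?_⟩, ?_⟩
    · rintro w ⟨c, hcC, hcne, rfl⟩
      obtain ⟨x, rfl⟩ := LinearMap.mem_range.mp hcC
      have hxne : x ≠ 0 := fun h => hcne (by rw [h, map_zero])
      exact hLB x hxne
    · rw [hm, hdstar]
      have h1 : ((k - 1) + (m - 1) * (δ - 1)) ≤ n := by omega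
      push_cast [Nat.cast_sub h1, Nat.cast_sub hk1, Nat.cast_sub hm1,
        Nat.cast_sub hδ1]
      ring
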